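/- Let (x,y) be a quasi-invertible pair in a local Moufang set with y not equivalent to 0 (so x ≁ ∞ and y is a unit). Then α_{ˣy} · τ^{-1}α_x τ · α_y · τ^{-1}α_{x^y}τ = μ_{ˣy} μ_y, where ˣy := (-y)·τ^{-1}α_{-x}τ is the left quasi-inverse and x^y := -(x·τα_yτ^{-1}) is the right quasi-inverse. -/

import Mathlib

open Equiv

@[simp] theorem Equiv.Perm.apply_inv_self {α : Type*} (f : Equiv.Perm α) (x : α) : f (f⁻¹ x) = x :=
  f.apply_symm_apply x

@[simp] theorem Equiv.Perm.inv_apply_self {α : Type*} (f : Equiv.Perm α) (x : α) : f⁻¹ (f x) = x :=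
  f.symm_apply_apply x

structure LocalMoufangSet (X : Type*) where
  r : X → X → Prop
  requiv : Equivalence r
  U : X → Subgroup (Equiv.Perm X)
  preserves : ∀ x : X, ∀ u ∈ U x, ∀ a b : X, r a b ↔ r (u a) (u b)
  big : ∃ a b c : X, ¬ r a b ∧ ¬ r b c ∧ ¬ r a c
  lm1 : ∀ x y : X, r x y → ∀ u ∈ U x, ∃ v ∈ U y, ∀ z : X, r (u z) (v z)
  lm2_fix : ∀ x : X, ∀ u ∈ U x, u x = x
  lm2_trans : ∀ x y z : X, ¬ r y x → ¬ r z x → ∃! u : Equiv.Perm X, u ∈ U x ∧ u y = z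
  lm2'_trans : ∀ x y z : X, ¬ r y x → ¬ r z x → ∃ u ∈ U x, r (u y) z
  lm2'_free : ∀ x : X, ∀ u ∈ U x, ∀ y : X, ¬ r y x → r (u y) y → ∀ z : X, r (u z) z
  lm3 : ∀ x : X, ∀ g ∈ (⨆ y : X, U y : Subgroup (Equiv.Perm X)),
      (U x).map (MulAut.conj g).toMonoidHom = U (g x)

namespace LocalMoufangSet

variable {X : Type*} (M : LocalMoufangSet X)

/-- The little projective group. -/
def G : Subgroup (Equiv.Perm X) := ⨆ x : X, M.U x

/-- `x` is a unit with respect to the base points `o` (zero) and `ι` (infinity). -/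
def IsUnitPt (o ι x : X) : Prop := ¬ M.r x o ∧ ¬ M.r x ι

/-- `μ` is the μ-map of `x`: it lies in the double coset `U_0 α_x U_0` and swaps `o` and `ι`.
(We use the left-action convention: a right product `g α h` corresponds to `h * α * g`.) -/
def IsMuMap (o ι x : X) (μ : Equiv.Perm X) : Prop :=
  μ o = ι ∧ μ ι = o ∧
    ∃ a ∈ M.U ι, a o = x ∧ ∃ g ∈ M.U o, ∃ h ∈ M.U o, μ = h * a * g

/-- Specialness with respect to a μ-map `τ`: `(-x)τ = -(xτ)` for all units `x`. -/
def Special (o ι : X) (τ : Equiv.Perm X) : Prop :=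
  ∀ z : X, IsUnitPt M o ι z → ∀ a ∈ M.U ι, a o = z → ∀ b ∈ M.U ι, b o = τ z →
    τ (a⁻¹ o) = b⁻¹ o

lemma mem_G {u : Equiv.Perm X} {x : X} (hu : u ∈ M.U x) : u ∈ M.G :=
  (le_iSup (fun x => M.U x) x) hu

lemma pres_of_mem_G {g : Equiv.Perm X} (hg : g ∈ M.G) (a b : X) :
    M.r a b ↔ M.r (g a) (g b) := by
  let S : Subgroup (Equiv.Perm X) :=
    { carrier := {g | ∀ a b, M.r a b ↔ M.r (g a) (g b)}
      one_mem' := by intro a b; simp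
      mul_mem' := by
        intro p q hp hq a b
        simpa [Equiv.Perm.mul_apply] using (hq a b).trans (hp (q a) (q b))
      inv_mem' := by
        intro p hp a b
        have := hp (p⁻¹ a) (p⁻¹ b)
        simp only [Equiv.Perm.apply_inv_self] at this
        exact this.symm }
  have hle : M.G ≤ S := iSup_le fun x => fun u hu => M.preserves x u hu
  exact hle hg a b

lemma conj_mem {g : Equiv.Perm X} (hg : g ∈ M.G) {x : X} {u : Equiv.Perm X}
    (hu : u ∈ M.U x) : g * u * g⁻¹ ∈ M.U (g x) := by
  rw [← M.lm3 x g hg]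
  exact Subgroup.mem_map.mpr ⟨u, hu, rfl⟩

lemma U_unique {x y z : X} (hyx : ¬ M.r y x) (hzx : ¬ M.r z x)
    {u v : Equiv.Perm X} (hu : u ∈ M.U x) (hv : v ∈ M.U x)
    (huy : u y = z) (hvy : v y = z) : u = v := by
  obtain ⟨w, -, hw⟩ := M.lm2_trans x y z hyx hzx
  rw [hw u ⟨hu, huy⟩, hw v ⟨hv, hvy⟩]

lemma mu_unique {o ι z : X} (h0 : ¬ M.r o ι) (hz : M.IsUnitPt o ι z)
    {μ μ' : Equiv.Perm X} (h1 : M.IsMuMap o ι z μ) (h2 : M.IsMuMap o ι z μ') :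
    μ = μ' := by
  have hι0 : ¬ M.r ι o := fun h => h0 (M.requiv.symm h)
  obtain ⟨ho1, hi1, a, haU, hao, g, hgU, h, hhU, rfl⟩ := h1
  obtain ⟨ho2, hi2, a', haU', hao', g', hgU', h', hhU', rfl⟩ := h2
  have haa : a' = a := M.U_unique h0 hz.2 haU' haU hao' hao
  rw [haa] at hi2 ho2 ⊢
  simp only [Equiv.Perm.mul_apply] at ho1 hi1 ho2 hi2
  rw [M.lm2_fix o g hgU, hao] at ho1
  rw [M.lm2_fix o g' hgU', hao] at ho2
  have hh : h = h' := M.U_unique hz.1 hι0 hhU hhU' ho1 ho2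
  rw [← hh] at hi2 ⊢
  have e1 : a (g ι) = o := h.injective (hi1.trans (M.lm2_fix o h hhU).symm)
  have e2 : a (g' ι) = o := h.injective (hi2.trans (M.lm2_fix o h hhU).symm)
  have g1 : g ι = a⁻¹ o := by rw [← e1, Equiv.Perm.inv_apply_self]
  have g2 : g' ι = a⁻¹ o := by rw [← e2, Equiv.Perm.inv_apply_self]
  have hao' : ¬ M.r (a⁻¹ o) o := by
    have h := M.preserves ι a haU (a⁻¹ o) o
    rw [Equiv.Perm.apply_inv_self, hao] at h
    exact fun hh => hz.1 (M.requiv.symm (h.mp hh))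
  have hg : g = g' := M.U_unique hι0 hao' hgU hgU' g1 g2
  rw [hg]

end LocalMoufangSet


/-- the quasi-inverse identity
`α_{ˣy} α_x^τ α_y α_{x^y}^τ = μ_{ˣy} μ_y` for a quasi-invertible pair `(x,y)`
with `y ≁ 0`.  Left-action convention: `ˣy = (τ * α⁻¹ * τ⁻¹) (αy⁻¹ o)`,
`x·α_y^{τ⁻¹} = (τ⁻¹ * αy * τ) x`, `x^y = b⁻¹ o` where `b` is its α-map, and the
right product reverses. -/
theorem stmt8 {X : Type*} (M : LocalMoufangSet X) (o ι : X) (h0 : ¬ M.r o ι)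
    (e : X) (he : M.IsUnitPt o ι e)
    (τ : Equiv.Perm X) (hτ : M.IsMuMap o ι e τ)
    (x : X) (hxι : ¬ M.r x ι)
    (y : X) (hy : M.IsUnitPt o ι y)
    (α : Equiv.Perm X) (hαU : α ∈ M.U ι) (hαo : α o = x)
    (αy : Equiv.Perm X) (hαyU : αy ∈ M.U ι) (hαyo : αy o = y)
    -- (x,y) is quasi-invertible
    (hqi : ¬ M.r (τ x) (αy⁻¹ o) ∨ M.r x o ∨ M.r y o)
    -- α-map of the left quasi-inverse ˣy
    (c : Equiv.Perm X) (hcU : c ∈ M.U ι)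
    (hc : c o = (τ * α⁻¹ * τ⁻¹) (αy⁻¹ o))
    -- α-map of x·α_y^{τ⁻¹}, whose negative is the right quasi-inverse x^y
    (b : Equiv.Perm X) (hbU : b ∈ M.U ι) (hb : b o = (τ⁻¹ * αy * τ) x)
    -- α-map of the right quasi-inverse x^y = -(x·α_y^{τ⁻¹})
    (d : Equiv.Perm X) (hdU : d ∈ M.U ι) (hd : d o = b⁻¹ o)
    (μl μy : Equiv.Perm X)
    (hμl : M.IsMuMap o ι ((τ * α⁻¹ * τ⁻¹) (αy⁻¹ o)) μl)
    (hμy : M.IsMuMap o ι y μy) :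
    (τ * d * τ⁻¹) * αy * (τ * α * τ⁻¹) * c = μy * μl := by
  obtain ⟨hτo, hτι, ta, htaU, -, tg, htgU, th, hthU, hτeq⟩ := hτ
  have hτG : τ ∈ M.G := by
    rw [hτeq]
    exact mul_mem (mul_mem (M.mem_G hthU) (M.mem_G htaU)) (M.mem_G htgU)
  have hαG : α ∈ M.G := M.mem_G hαU
  have hαyG : αy ∈ M.G := M.mem_G hαyU
  have hcG : c ∈ M.G := M.mem_G hcU
  have hbG : b ∈ M.G := M.mem_G hbU
  have hιo : ¬ M.r ι o := fun h => h0 (M.requiv.symm h)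
  have hτio : τ⁻¹ ι = o := by rw [← hτo, Equiv.Perm.inv_apply_self]
  have hτiι : τ⁻¹ o = ι := by rw [← hτι, Equiv.Perm.inv_apply_self]
  have hαι : α ι = ι := M.lm2_fix ι α hαU
  have hαyι : αy ι = ι := M.lm2_fix ι αy hαyU
  have hcι : c ι = ι := M.lm2_fix ι c hcU
  have hbι : b ι = ι := M.lm2_fix ι b hbU
  have hdι : d ι = ι := M.lm2_fix ι d hdU
  -- basic non-equivalences about m := αy⁻¹ o
  have hmι : ¬ M.r (αy⁻¹ o) ι := by
    have h := M.pres_of_mem_G hαyG (αy⁻¹ o) ι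
    rw [Equiv.Perm.apply_inv_self, hαyι] at h
    exact fun hh => h0 (h.mp hh)
  have hmo : ¬ M.r (αy⁻¹ o) o := by
    have h := M.pres_of_mem_G hαyG (αy⁻¹ o) o
    rw [Equiv.Perm.apply_inv_self, hαyo] at h
    exact fun hh => hy.1 (M.requiv.symm (h.mp hh))
  -- quasi-invertibility always gives the key non-equivalence
  have K : ¬ M.r (τ x) (αy⁻¹ o) := by
    rcases hqi with K | hxo | hyo
    · exact K
    · intro hK
      have h1 : M.r (τ x) ι := by
        have := (M.pres_of_mem_G hτG x o).mp hxo
        rwa [hτo] at this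
      exact hmι (M.requiv.trans (M.requiv.symm hK) h1)
    · exact absurd hyo hy.1
  -- the left quasi-inverse is a unit
  have hPι : ¬ M.r ((τ * α⁻¹ * τ⁻¹) (αy⁻¹ o)) ι := by
    intro hh
    apply K
    apply M.requiv.symm
    rw [show (ι : X) = τ o from hτo.symm] at hh
    simp only [Equiv.Perm.mul_apply] at hh
    have h1 : M.r (α⁻¹ (τ⁻¹ (αy⁻¹ o))) o :=
      (M.pres_of_mem_G hτG (α⁻¹ (τ⁻¹ (αy⁻¹ o))) o).mpr hh
    have h2 := (M.pres_of_mem_G hαG (α⁻¹ (τ⁻¹ (αy⁻¹ o))) o).mp h1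
    rw [Equiv.Perm.apply_inv_self, hαo] at h2
    have h3 := (M.pres_of_mem_G hτG (τ⁻¹ (αy⁻¹ o)) x).mp h2
    rwa [Equiv.Perm.apply_inv_self] at h3
  have hPo : ¬ M.r ((τ * α⁻¹ * τ⁻¹) (αy⁻¹ o)) o := by
    intro hh
    apply hmo
    have hh' : M.r (τ (α⁻¹ (τ⁻¹ (αy⁻¹ o)))) (τ ι) := by
      rw [hτι]; simpa only [Equiv.Perm.mul_apply] using hh
    have h1 : M.r (α⁻¹ (τ⁻¹ (αy⁻¹ o))) ι :=
      (M.pres_of_mem_G hτG (α⁻¹ (τ⁻¹ (αy⁻¹ o))) ι).mpr hh'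
    have h2 := (M.pres_of_mem_G hαG (α⁻¹ (τ⁻¹ (αy⁻¹ o))) ι).mp h1
    rw [Equiv.Perm.apply_inv_self, hαι, ← hτiι] at h2
    have h3 := (M.pres_of_mem_G hτG (τ⁻¹ (αy⁻¹ o)) (τ⁻¹ o)).mp h2
    rwa [Equiv.Perm.apply_inv_self, Equiv.Perm.apply_inv_self] at h3
  have hPunit : M.IsUnitPt o ι ((τ * α⁻¹ * τ⁻¹) (αy⁻¹ o)) := ⟨hPo, hPι⟩
  -- d = b⁻¹
  have hbinvι : ¬ M.r (b⁻¹ o) ι := by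
    have h := M.pres_of_mem_G hbG (b⁻¹ o) ι
    rw [Equiv.Perm.apply_inv_self, hbι] at h
    exact fun hh => h0 (h.mp hh)
  have hdb : d = b⁻¹ := M.U_unique h0 hbinvι hdU (inv_mem hbU) hd rfl
  -- decomposition of μy
  obtain ⟨hμyo, hμyι, ay, hayU, hayo, gy, hgyU, ky, hkyU, hμyeq⟩ := hμy
  have hayy : ay = αy := M.U_unique h0 hy.2 hayU hαyU hayo hαyo
  rw [hayy] at hμyeq
  -- conjugate memberships
  have hDU : τ * d * τ⁻¹ ∈ M.U o := by
    have := M.conj_mem hτG hdU; rwa [hτι] at this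
  have hAU : τ * α * τ⁻¹ ∈ M.U o := by
    have := M.conj_mem hτG hαU; rwa [hτι] at this
  -- pointwise values of the left-hand side
  have key1 : ((τ * d * τ⁻¹) * αy * (τ * α * τ⁻¹) * c) o = o := by
    simp only [Equiv.Perm.mul_apply, hc, Equiv.Perm.inv_apply_self,
      Equiv.Perm.apply_inv_self]
    rw [hτiι, hdι, hτι]
  have key2 : ((τ * d * τ⁻¹) * αy * (τ * α * τ⁻¹) * c) ι = ι := by
    simp only [Equiv.Perm.mul_apply, hcι]
    rw [hτio, hαo]
    have hq : τ⁻¹ (αy (τ x)) = b o := by rw [hb]; simp [Equiv.Perm.mul_apply]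
    rw [hq, hdb, Equiv.Perm.inv_apply_self, hτo]
  -- N := μy⁻¹ * LHS is a μ-map of the left quasi-inverse
  have hNmu : M.IsMuMap o ι ((τ * α⁻¹ * τ⁻¹) (αy⁻¹ o))
      (μy⁻¹ * ((τ * d * τ⁻¹) * αy * (τ * α * τ⁻¹) * c)) := by
    refine ⟨?_, ?_, c, hcU, hc, ?_⟩
    · rw [Equiv.Perm.mul_apply, key1, ← hμyι, Equiv.Perm.inv_apply_self]
    · rw [Equiv.Perm.mul_apply, key2, ← hμyo, Equiv.Perm.inv_apply_self]
    · have hu1 : ky⁻¹ * (τ * d * τ⁻¹) ∈ M.U o := mul_mem (inv_mem hkyU) hDU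
      have hv : αy⁻¹ * (ky⁻¹ * (τ * d * τ⁻¹)) * αy ∈ M.U (αy⁻¹ o) := by
        have := M.conj_mem (inv_mem hαyG) hu1
        rwa [inv_inv] at this
      have hAinv : (τ * α * τ⁻¹)⁻¹ = τ * α⁻¹ * τ⁻¹ := by group
      have hw : (τ * α * τ⁻¹)⁻¹ * (αy⁻¹ * (ky⁻¹ * (τ * d * τ⁻¹)) * αy) *
          ((τ * α * τ⁻¹)⁻¹)⁻¹ ∈ M.U (c o) := by
        have := M.conj_mem (inv_mem (M.mem_G hAU)) hv
        rwa [hAinv, ← hc] at this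
      have hg2 : c⁻¹ * ((τ * α * τ⁻¹)⁻¹ * (αy⁻¹ * (ky⁻¹ * (τ * d * τ⁻¹)) * αy) *
          ((τ * α * τ⁻¹)⁻¹)⁻¹) * c ∈ M.U o := by
        have := M.conj_mem (inv_mem hcG) hw
        rwa [inv_inv, Equiv.Perm.inv_apply_self] at this
      refine ⟨_, hg2, gy⁻¹ * (τ * α * τ⁻¹), mul_mem (inv_mem hgyU) hAU, ?_⟩
      rw [hμyeq]
      group
  have hfinal := M.mu_unique h0 hPunit hNmu hμl
  rw [← hfinal]
  group
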